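/- Let H be a group, σ ∈ H, and U, U₁, X subgroups of H such that U₁σU/U and XU₁/U₁ are finite and U₂ := XU₁ is a subgroup. Then U₂σU/U is finite, and e · ch(U₂σU) = Σ_δ ch(δU₁σU), where δ ranges over a set of representatives of X/(X ∩ U₁), ch(Y) denotes the characteristic function H → ℤ of a subset Y, and e = [U₂ ∩ σUσ⁻¹ : U₁ ∩ σUσ⁻¹]. If moreover U₂ ∩ σUσ⁻¹ equals the product of X ∩ σUσ⁻¹ and U₁ ∩ σUσ⁻¹, then e = [X ∩ σUσ⁻¹ : X ∩ U₁ ∩ σUσ⁻¹]. -/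

import Mathlib

open scoped Pointwise

private lemma memMul3 {H : Type*} [Group H] {A B : Set H} {σ g : H} :
    g ∈ A * {σ} * B ↔ ∃ a ∈ A, ∃ b ∈ B, g = a * σ * b := by
  constructor
  · rintro ⟨_, ⟨a, ha, c, rfl, rfl⟩, b, hb, rfl⟩
    exact ⟨a, ha, b, hb, rfl⟩
  · rintro ⟨a, ha, b, hb, rfl⟩
    exact ⟨a * σ, ⟨a, ha, σ, rfl, rfl⟩, b, hb, rfl⟩

private lemma memMul4 {H : Type*} [Group H] {B C : Set H} {δ σ g : H} :
    g ∈ {δ} * B * {σ} * C ↔ ∃ b ∈ B, ∃ c ∈ C, g = δ * b * σ * c := by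
  constructor
  · rintro ⟨_, ⟨_, ⟨d, rfl, b, hb, rfl⟩, s, rfl, rfl⟩, c, hc, rfl⟩
    exact ⟨b, hb, c, hc, rfl⟩
  · rintro ⟨b, hb, c, hc, rfl⟩
    exact ⟨δ * b * σ, ⟨δ * b, ⟨δ, rfl, b, hb, rfl⟩, σ, rfl, rfl⟩, c, hc, rfl⟩

/-- Key counting lemma: for `w ∈ U₂`, the number of representatives `δ ∈ D` with
`δ⁻¹w ∈ U₁·σU` equals the relative index `[U₂ ⊓ σU : U₁ ⊓ σU]`. -/
private lemma count_card {H : Type*} [Group H] (U₁ X : Subgroup H)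
    (U₂ : Subgroup H) (hU₂ : (U₂ : Set H) = (X : Set H) * (U₁ : Set H))
    (σU : Subgroup H)
    (D : Finset H) (hDX : (D : Set H) ⊆ (X : Set H))
    (hD : ∀ x ∈ X, ∃! δ, δ ∈ D ∧ δ⁻¹ * x ∈ X ⊓ U₁)
    {w : H} (hw : w ∈ U₂)
    [DecidablePred fun δ => δ⁻¹ * w ∈ (U₁ : Set H) * (σU : Set H)] :
    (U₁ ⊓ σU).relIndex (U₂ ⊓ σU) =
      (D.filter (fun δ => δ⁻¹ * w ∈ (U₁ : Set H) * (σU : Set H))).card := by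
  have hXle : X ≤ U₂ := fun x hx => by
    rw [← SetLike.mem_coe, hU₂]
    exact Set.mem_mul.mpr ⟨x, SetLike.mem_coe.mpr hx, 1, SetLike.mem_coe.mpr (one_mem _), mul_one x⟩
  have hU₁le : U₁ ≤ U₂ := fun u hu => by
    rw [← SetLike.mem_coe, hU₂]
    exact Set.mem_mul.mpr ⟨1, SetLike.mem_coe.mpr (one_mem _), u, SetLike.mem_coe.mpr hu, one_mul u⟩
  set F := D.filter (fun δ => δ⁻¹ * w ∈ (U₁ : Set H) * (σU : Set H)) with hF
  have hsel : ∀ δ ∈ F, ∃ u s : H, u ∈ U₁ ∧ s ∈ σU ∧ δ⁻¹ * w = u * s := by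
    intro δ hδ
    obtain ⟨u, hu, s, hs, h⟩ := Set.mem_mul.mp (Finset.mem_filter.mp hδ).2
    exact ⟨u, s, SetLike.mem_coe.mp hu, SetLike.mem_coe.mp hs, h.symm⟩
  choose uf sf huf hsf heq using hsel
  have hsmem : ∀ δ (hδ : δ ∈ F), (sf δ hδ)⁻¹ ∈ U₂ ⊓ σU := by
    intro δ hδ
    have hδU₂ : δ ∈ U₂ := hXle (SetLike.mem_coe.mp (hDX (Finset.mem_coe.mpr (Finset.mem_filter.mp hδ).1)))
    have hs2 : sf δ hδ = (uf δ hδ)⁻¹ * (δ⁻¹ * w) := by rw [heq δ hδ]; group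
    refine Subgroup.mem_inf.mpr ⟨?_, inv_mem (hsf δ hδ)⟩
    rw [hs2]
    exact inv_mem (mul_mem (inv_mem (hU₁le (huf δ hδ))) (mul_mem (inv_mem hδU₂) hw))
  let K := (U₁ ⊓ σU).subgroupOf (U₂ ⊓ σU)
  let f : {δ // δ ∈ F} → (↥(U₂ ⊓ σU)) ⧸ K :=
    fun δ => QuotientGroup.mk ⟨(sf δ.1 δ.2)⁻¹, hsmem δ.1 δ.2⟩
  have hinj : Function.Injective f := by
    rintro ⟨δ, hδ⟩ ⟨δ', hδ'⟩ hff
    have h1 := QuotientGroup.eq.mp hff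
    rw [Subgroup.mem_subgroupOf] at h1
    have h2 : (sf δ hδ) * (sf δ' hδ')⁻¹ ∈ U₁ ⊓ σU := by simpa using h1
    have hs'U₁ : sf δ hδ * (sf δ' hδ')⁻¹ ∈ U₁ := (Subgroup.mem_inf.mp h2).1
    have hkey : δ'⁻¹ * δ = uf δ' hδ' * (sf δ hδ * (sf δ' hδ')⁻¹)⁻¹ * (uf δ hδ)⁻¹ := by
      have h0 : δ'⁻¹ * δ = (δ'⁻¹ * w) * (δ⁻¹ * w)⁻¹ := by group
      rw [heq δ hδ, heq δ' hδ'] at h0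
      rw [h0]; group
    have hmemU₁ : δ'⁻¹ * δ ∈ U₁ := by
      rw [hkey]
      exact mul_mem (mul_mem (huf δ' hδ') (inv_mem hs'U₁)) (inv_mem (huf δ hδ))
    have hδX : δ ∈ X :=
      SetLike.mem_coe.mp (hDX (Finset.mem_coe.mpr (Finset.mem_filter.mp hδ).1))
    have hδ'X : δ' ∈ X :=
      SetLike.mem_coe.mp (hDX (Finset.mem_coe.mpr (Finset.mem_filter.mp hδ').1))
    have e1 : δ' ∈ D ∧ δ'⁻¹ * δ ∈ X ⊓ U₁ :=
      ⟨(Finset.mem_filter.mp hδ').1,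
        Subgroup.mem_inf.mpr ⟨mul_mem (inv_mem hδ'X) hδX, hmemU₁⟩⟩
    have e2 : δ ∈ D ∧ δ⁻¹ * δ ∈ X ⊓ U₁ :=
      ⟨(Finset.mem_filter.mp hδ).1, by simpa using one_mem (X ⊓ U₁)⟩
    exact Subtype.ext ((hD δ hδX).unique e2 e1)
  have hsurj : Function.Surjective f := by
    intro q
    obtain ⟨v, rfl⟩ := QuotientGroup.mk_surjective q
    obtain ⟨hvU₂, hvσU⟩ := Subgroup.mem_inf.mp v.2
    have hwv : w * (v : H) ∈ (X : Set H) * (U₁ : Set H) := by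
      rw [← hU₂]; exact SetLike.mem_coe.mpr (mul_mem hw hvU₂)
    obtain ⟨x, hx, u₁, hu₁, hxu⟩ := Set.mem_mul.mp hwv
    obtain ⟨δ, ⟨hδD, hδx⟩, -⟩ := hD x (SetLike.mem_coe.mp hx)
    have hδU₁ : δ⁻¹ * x ∈ U₁ := (Subgroup.mem_inf.mp hδx).2
    have hwx : w = x * u₁ * (v : H)⁻¹ := by rw [hxu]; group
    have hδF : δ ∈ F := by
      refine Finset.mem_filter.mpr ⟨hδD, ?_⟩
      refine Set.mem_mul.mpr ⟨(δ⁻¹ * x) * u₁,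
        SetLike.mem_coe.mpr (mul_mem hδU₁ (SetLike.mem_coe.mp hu₁)),
        (v : H)⁻¹, SetLike.mem_coe.mpr (inv_mem hvσU), ?_⟩
      rw [hwx]; group
    refine ⟨⟨δ, hδF⟩, ?_⟩
    refine QuotientGroup.eq.mpr ?_
    rw [Subgroup.mem_subgroupOf]
    have hcoe : (((⟨(sf δ hδF)⁻¹, hsmem δ hδF⟩ : ↥(U₂ ⊓ σU))⁻¹ * v : ↥(U₂ ⊓ σU)) : H)
        = sf δ hδF * (v : H) := by simp
    have hsv : sf δ hδF * (v : H) = (uf δ hδF)⁻¹ * (δ⁻¹ * x) * u₁ := by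
      have h1 : sf δ hδF = (uf δ hδF)⁻¹ * (δ⁻¹ * w) := by rw [heq δ hδF]; group
      rw [h1, hwx]; group
    have hmem1 : sf δ hδF * (v : H) ∈ U₁ := by
      rw [hsv]
      exact mul_mem (mul_mem (inv_mem (huf δ hδF)) hδU₁) (SetLike.mem_coe.mp hu₁)
    have hmem2 : sf δ hδF * (v : H) ∈ σU := mul_mem (hsf δ hδF) hvσU
    rw [hcoe]
    exact Subgroup.mem_inf.mpr ⟨hmem1, hmem2⟩
  have e1 : (U₁ ⊓ σU).relIndex (U₂ ⊓ σU) = Nat.card ((↥(U₂ ⊓ σU)) ⧸ K) := rfl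
  rw [e1, ← Nat.card_eq_finsetCard F]
  exact (Nat.card_congr (Equiv.ofBijective f ⟨hinj, hsurj⟩)).symm

/-- Comparison of relative indices when `U₂ ⊓ σU = (X ⊓ σU)·(U₁ ⊓ σU)`. -/
private lemma relindex_comparison {H : Type*} [Group H] (U₁ X U₂ σU : Subgroup H)
    (hXle : X ≤ U₂)
    (hprod : ((U₂ ⊓ σU : Subgroup H) : Set H)
      = ((X ⊓ σU : Subgroup H) : Set H) * ((U₁ ⊓ σU : Subgroup H) : Set H)) :
    (U₁ ⊓ σU).relIndex (U₂ ⊓ σU) = (X ⊓ U₁ ⊓ σU).relIndex (X ⊓ σU) := by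
  have hle : X ⊓ σU ≤ U₂ ⊓ σU := inf_le_inf_right σU hXle
  let K := (U₁ ⊓ σU).subgroupOf (U₂ ⊓ σU)
  let K' := (X ⊓ U₁ ⊓ σU).subgroupOf (X ⊓ σU)
  let φ : ↥(X ⊓ σU) → (↥(U₂ ⊓ σU)) ⧸ K := fun x => QuotientGroup.mk ⟨x.1, hle x.2⟩
  have hresp : ∀ x y : ↥(X ⊓ σU), (QuotientGroup.leftRel K') x y → φ x = φ y := by
    intro x y hxy
    rw [QuotientGroup.leftRel_apply, Subgroup.mem_subgroupOf] at hxy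
    have h1 : (x : H)⁻¹ * (y : H) ∈ X ⊓ U₁ ⊓ σU := by simpa using hxy
    refine QuotientGroup.eq.mpr ?_
    rw [Subgroup.mem_subgroupOf]
    have : (((⟨(x : H), hle x.2⟩ : ↥(U₂ ⊓ σU))⁻¹ * ⟨(y : H), hle y.2⟩ : ↥(U₂ ⊓ σU)) : H)
        = (x : H)⁻¹ * (y : H) := by simp
    rw [this]
    exact Subgroup.mem_inf.mpr
      ⟨(Subgroup.mem_inf.mp (Subgroup.mem_inf.mp h1).1).2, (Subgroup.mem_inf.mp h1).2⟩
  let f : (↥(X ⊓ σU)) ⧸ K' → (↥(U₂ ⊓ σU)) ⧸ K := Quotient.lift φ hresp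
  have hinj : Function.Injective f := by
    intro a b
    obtain ⟨x, rfl⟩ := QuotientGroup.mk_surjective a
    obtain ⟨y, rfl⟩ := QuotientGroup.mk_surjective b
    intro hfe
    have h := QuotientGroup.eq.mp
      (show (QuotientGroup.mk ⟨(x : H), hle x.2⟩ : (↥(U₂ ⊓ σU)) ⧸ K)
        = QuotientGroup.mk ⟨(y : H), hle y.2⟩ from hfe)
    rw [Subgroup.mem_subgroupOf] at h
    have h1 : (x : H)⁻¹ * (y : H) ∈ U₁ ⊓ σU := by simpa using h
    have hx : (x : H) ∈ X := (Subgroup.mem_inf.mp x.2).1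
    have hy : (y : H) ∈ X := (Subgroup.mem_inf.mp y.2).1
    refine QuotientGroup.eq.mpr ?_
    rw [Subgroup.mem_subgroupOf]
    have hco : (((x⁻¹ * y : ↥(X ⊓ σU))) : H) = (x : H)⁻¹ * (y : H) := by simp
    rw [hco]
    exact Subgroup.mem_inf.mpr
      ⟨Subgroup.mem_inf.mpr ⟨mul_mem (inv_mem hx) hy, (Subgroup.mem_inf.mp h1).1⟩,
        (Subgroup.mem_inf.mp h1).2⟩
  have hsurj : Function.Surjective f := by
    intro q
    obtain ⟨v, rfl⟩ := QuotientGroup.mk_surjective q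
    have hv : (v : H) ∈ ((X ⊓ σU : Subgroup H) : Set H) * ((U₁ ⊓ σU : Subgroup H) : Set H) := by
      rw [← hprod]; exact v.2
    obtain ⟨x, hx, t, ht, hxt⟩ := Set.mem_mul.mp hv
    refine ⟨QuotientGroup.mk ⟨x, SetLike.mem_coe.mp hx⟩, ?_⟩
    refine QuotientGroup.eq.mpr ?_
    rw [Subgroup.mem_subgroupOf]
    have hxv : x⁻¹ * (v : H) = t := by rw [← hxt]; group
    have hco : (((⟨x, hle (SetLike.mem_coe.mp hx)⟩ : ↥(U₂ ⊓ σU))⁻¹ * v : ↥(U₂ ⊓ σU)) : H)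
        = x⁻¹ * (v : H) := by simp
    rw [hco, hxv]
    exact SetLike.mem_coe.mp ht
  have e1 : (U₁ ⊓ σU).relIndex (U₂ ⊓ σU) = Nat.card ((↥(U₂ ⊓ σU)) ⧸ K) := rfl
  have e2 : (X ⊓ U₁ ⊓ σU).relIndex (X ⊓ σU) = Nat.card ((↥(X ⊓ σU)) ⧸ K') := rfl
  rw [e1, e2]
  exact (Nat.card_congr (Equiv.ofBijective f ⟨hinj, hsurj⟩)).symm

/-- Lemma on products of double cosets with a non-parahoric group `U₂ = X·U₁`:
finiteness of `U₂σU/U`, the identity `e · ch(U₂σU) = Σ_δ ch(δU₁σU)` over representatives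
`δ` of `X/(X ∩ U₁)`, with `e = [U₂ ∩ σUσ⁻¹ : U₁ ∩ σUσ⁻¹]`; and if `U₂ ∩ σUσ⁻¹` is the
product of `X ∩ σUσ⁻¹` and `U₁ ∩ σUσ⁻¹`, then `e = [X ∩ σUσ⁻¹ : X ∩ U₁ ∩ σUσ⁻¹]`. -/
theorem double_coset_product_decomposition
    {H : Type*} [Group H] (σ : H) (U U₁ X : Subgroup H)
    (hfin₁ : ((fun u => (QuotientGroup.mk (u * σ) : H ⧸ U)) '' (U₁ : Set H)).Finite)
    (hfin₂ : ((fun x => (QuotientGroup.mk x : H ⧸ U₁)) '' (X : Set H)).Finite)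
    (U₂ : Subgroup H) (hU₂ : (U₂ : Set H) = (X : Set H) * (U₁ : Set H))
    (σU : Subgroup H) (hσU : σU = U.map (MulAut.conj σ).toMonoidHom)
    (D : Finset H) (hDX : (D : Set H) ⊆ (X : Set H))
    (hD : ∀ x ∈ X, ∃! δ, δ ∈ D ∧ δ⁻¹ * x ∈ X ⊓ U₁) :
    ((fun u => (QuotientGroup.mk (u * σ) : H ⧸ U)) '' (U₂ : Set H)).Finite ∧
    (∀ g : H,
      (((U₁ ⊓ σU).relIndex (U₂ ⊓ σU) : ℤ)) *
          Set.indicator ((U₂ : Set H) * {σ} * (U : Set H)) (fun _ => (1 : ℤ)) g =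
        ∑ δ ∈ D, Set.indicator ({δ} * (U₁ : Set H) * {σ} * (U : Set H)) (fun _ => (1 : ℤ)) g) ∧
    (((U₂ ⊓ σU : Subgroup H) : Set H) =
        ((X ⊓ σU : Subgroup H) : Set H) * ((U₁ ⊓ σU : Subgroup H) : Set H) →
      (U₁ ⊓ σU).relIndex (U₂ ⊓ σU) = (X ⊓ U₁ ⊓ σU).relIndex (X ⊓ σU)) := by
  classical
  have hXle : X ≤ U₂ := fun x hx => by
    rw [← SetLike.mem_coe, hU₂]
    exact Set.mem_mul.mpr ⟨x, SetLike.mem_coe.mpr hx, 1, SetLike.mem_coe.mpr (one_mem _), mul_one x⟩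
  have hU₁le : U₁ ≤ U₂ := fun u hu => by
    rw [← SetLike.mem_coe, hU₂]
    exact Set.mem_mul.mpr ⟨1, SetLike.mem_coe.mpr (one_mem _), u, SetLike.mem_coe.mpr hu, one_mul u⟩
  refine ⟨?_, ?_, relindex_comparison U₁ X U₂ σU hXle⟩
  · -- finiteness
    have hsub : ((fun u => (QuotientGroup.mk (u * σ) : H ⧸ U)) '' (U₂ : Set H)) ⊆
        ⋃ δ ∈ D, (fun q => δ • q) '' ((fun u => (QuotientGroup.mk (u * σ) : H ⧸ U)) '' (U₁ : Set H)) := by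
      rintro _ ⟨w, hw, rfl⟩
      have hw' : w ∈ (X : Set H) * (U₁ : Set H) := by rw [← hU₂]; exact hw
      obtain ⟨x, hx, u₁, hu₁, hxu⟩ := Set.mem_mul.mp hw'
      obtain ⟨δ, ⟨hδD, hδx⟩, -⟩ := hD x (SetLike.mem_coe.mp hx)
      have hδu : δ⁻¹ * x ∈ U₁ := (Subgroup.mem_inf.mp hδx).2
      have hwd : w = δ * (δ⁻¹ * x * u₁) := by rw [← hxu]; group
      refine Set.mem_iUnion₂.mpr ⟨δ, hδD, ?_⟩
      refine ⟨QuotientGroup.mk ((δ⁻¹ * x * u₁) * σ),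
        ⟨δ⁻¹ * x * u₁, SetLike.mem_coe.mpr (mul_mem hδu (SetLike.mem_coe.mp hu₁)), rfl⟩, ?_⟩
      show (QuotientGroup.mk (δ * ((δ⁻¹ * x * u₁) * σ)) : H ⧸ U) = QuotientGroup.mk (w * σ)
      exact congrArg _ (by rw [hwd]; group)
    exact Set.Finite.subset
      (Set.Finite.biUnion D.finite_toSet (fun δ _ => hfin₁.image _)) hsub
  · -- main identity
    intro g
    by_cases hg : g ∈ (U₂ : Set H) * {σ} * (U : Set H)
    · obtain ⟨w, hw, u, hu, hgw⟩ := memMul3.mp hg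
      rw [Set.indicator_of_mem hg, mul_one]
      have hRHS : ∀ δ : H, Set.indicator ({δ} * (U₁ : Set H) * {σ} * (U : Set H)) (fun _ => (1 : ℤ)) g
          = if δ⁻¹ * w ∈ (U₁ : Set H) * (σU : Set H) then 1 else 0 := by
        intro δ
        by_cases hc : δ⁻¹ * w ∈ (U₁ : Set H) * (σU : Set H)
        · rw [if_pos hc]
          refine Set.indicator_of_mem ?_ _
          obtain ⟨u₁, hu₁, t, ht, hut⟩ := Set.mem_mul.mp hc
          have htσ : t ∈ σU := SetLike.mem_coe.mp ht
          rw [hσU] at htσ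
          obtain ⟨u₀, hu₀, hconj⟩ := Subgroup.mem_map.mp htσ
          have hconj' : t = σ * u₀ * σ⁻¹ := by
            rw [← hconj]; simp [MulAut.conj_apply]
          refine memMul4.mpr ⟨u₁, hu₁, u₀ * u,
            SetLike.mem_coe.mpr (mul_mem hu₀ (SetLike.mem_coe.mp hu)), ?_⟩
          have hw' : w = δ * (u₁ * t) := by rw [hut]; group
          rw [hgw, hw', hconj']; group
        · rw [if_neg hc]
          refine Set.indicator_of_notMem ?_ _
          intro hgin
          obtain ⟨u₁, hu₁, u', hu', hge⟩ := memMul4.mp hgin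
          apply hc
          have hww : w = δ * u₁ * σ * u' * u⁻¹ * σ⁻¹ := by
            have h := hgw.symm.trans hge
            rw [← h]; group
          refine Set.mem_mul.mpr ⟨u₁, hu₁, σ * (u' * u⁻¹) * σ⁻¹, ?_, ?_⟩
          · rw [hσU]
            exact SetLike.mem_coe.mpr (Subgroup.mem_map.mpr
              ⟨u' * u⁻¹, mul_mem (SetLike.mem_coe.mp hu') (inv_mem (SetLike.mem_coe.mp hu)),
                by simp [MulAut.conj_apply]⟩)
          · rw [hww]; group
      rw [Finset.sum_congr rfl (fun δ _ => hRHS δ), Finset.sum_boole]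
      rw [count_card U₁ X U₂ hU₂ σU D hDX hD (SetLike.mem_coe.mp hw)]
    · rw [Set.indicator_of_notMem hg, mul_zero]
      symm
      refine Finset.sum_eq_zero ?_
      intro δ hδ
      refine Set.indicator_of_notMem ?_ _
      intro hgin
      obtain ⟨u₁, hu₁, u', hu', hge⟩ := memMul4.mp hgin
      refine hg (memMul3.mpr ⟨δ * u₁, ?_, u', hu', by rw [hge]⟩)
      exact SetLike.mem_coe.mpr
        (mul_mem (hXle (SetLike.mem_coe.mp (hDX (Finset.mem_coe.mpr hδ))))
          (hU₁le (SetLike.mem_coe.mp hu₁)))
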